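/- Let g(z) = (z − a_1)⋯(z − a_m) ∈ ℂ[z] with m ≥ 2, d ≥ 1, and f(z) = g(z^d). If z ∈ ℂ satisfies d·log|z| > log⁺ max_i|a_i| + (m/(m−1))·log 2, then the escape-rate function G_f(z) = lim_{k→∞} (dm)^{−k} log⁺|f^k(z)| satisfies log|z| − (m/(dm−1))·log 2 ≤ G_f(z) ≤ log|z| + (m/(dm−1))·log(3/2). -/

import Mathlib

open Polynomial Filter

/-- `log⁺ t = max (log t) 0`. -/
noncomputable def logPlus (t : ℝ) : ℝ := max (Real.log t) 0

set_option maxHeartbeats 1000000 in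
private lemma arch_key (m : ℕ) (hm : 2 ≤ m) (d : ℕ) (hd : 1 ≤ d)
    (a : Fin m → ℂ) (f : Polynomial ℂ)
    (hf : f = (∏ i : Fin m, (X - C (a i))).comp (X ^ d))
    (w : ℂ) (hw : (d : ℝ) * Real.log (‖w‖) >
      logPlus (⨆ i, ‖a i‖) + ((m : ℝ) / ((m : ℝ) - 1)) * Real.log 2) :
    ((d : ℝ) * m * Real.log (‖w‖) - m * Real.log 2
        ≤ Real.log (‖f.eval w‖)) ∧
    (Real.log (‖f.eval w‖)
        ≤ (d : ℝ) * m * Real.log (‖w‖) + m * Real.log (3 / 2)) ∧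
    ((d : ℝ) * Real.log (‖f.eval w‖) >
      logPlus (⨆ i, ‖a i‖) + ((m : ℝ) / ((m : ℝ) - 1)) * Real.log 2) := by
  set S := ⨆ i, ‖a i‖ with hSdef
  have hmR : (2:ℝ) ≤ (m:ℝ) := by exact_mod_cast hm
  have hdR : (1:ℝ) ≤ (d:ℝ) := by exact_mod_cast hd
  have hA0 : 0 ≤ logPlus S := le_max_right _ _
  have hlog2 : 0 < Real.log 2 := Real.log_pos (by norm_num)
  have hm1 : (1:ℝ) ≤ (m:ℝ)/((m:ℝ)-1) := by
    rw [le_div_iff₀ (by linarith)]; linarith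
  have hrhs : 0 < logPlus S + ((m:ℝ)/((m:ℝ)-1)) * Real.log 2 := by nlinarith
  have hlw : 0 < Real.log (‖w‖) := by nlinarith [hw]
  have habsw : 0 < ‖w‖ := by
    by_contra h
    push_neg at h
    have : ‖w‖ = 0 := le_antisymm h (norm_nonneg w)
    rw [this, Real.log_zero] at hlw; linarith
  set t : ℝ := ‖w‖ ^ d with htdef
  have ht0 : 0 < t := pow_pos habsw d
  have hlogt : Real.log t = (d:ℝ) * Real.log (‖w‖) := by
    rw [htdef, Real.log_pow]
  have h1exp : 1 ≤ Real.exp (logPlus S) := Real.one_le_exp hA0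
  have hSexp : S ≤ Real.exp (logPlus S) := by
    rcases le_or_gt S 0 with h | h
    · exact h.trans (le_of_lt (Real.exp_pos _))
    · calc S = Real.exp (Real.log S) := (Real.exp_log h).symm
        _ ≤ Real.exp (logPlus S) := Real.exp_le_exp.mpr (le_max_left _ _)
  have h2t : 2 * Real.exp (logPlus S) < t := by
    have hlt : logPlus S + Real.log 2 < Real.log t := by rw [hlogt]; nlinarith
    calc 2 * Real.exp (logPlus S) = Real.exp (logPlus S + Real.log 2) := by
          rw [Real.exp_add, Real.exp_log (by norm_num : (0:ℝ) < 2)]; ring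
      _ < Real.exp (Real.log t) := Real.exp_lt_exp.mpr hlt
      _ = t := Real.exp_log ht0
  have hSt : 2 * S < t := by nlinarith
  have h2tle : 2 < t := by nlinarith
  have hfac : ∀ i : Fin m, t / 2 ≤ ‖w ^ d - a i‖ ∧
      ‖w ^ d - a i‖ ≤ 3 / 2 * t := by
    intro i
    have hai : ‖a i‖ ≤ S := by
      rw [hSdef]
      exact le_ciSup (Set.Finite.bddAbove (Set.finite_range fun i => ‖a i‖)) i
    have habs : ‖w ^ d‖ = t := by rw [norm_pow]
    have hl : ‖w ^ d‖ - ‖a i‖ ≤ ‖w ^ d - a i‖ :=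
      norm_sub_norm_le _ _
    have hu : ‖w ^ d - a i‖ ≤ ‖w ^ d‖ + ‖a i‖ := by
      exact norm_sub_le (w ^ d) (a i)
    rw [habs] at hl hu
    constructor <;> nlinarith
  have hev : f.eval w = ∏ i : Fin m, (w ^ d - a i) := by
    simp [hf, eval_comp, eval_prod]
  have habsf : ‖f.eval w‖ = ∏ i : Fin m, ‖w ^ d - a i‖ := by
    rw [hev]; exact norm_prod _ _
  have hfacpos : ∀ i : Fin m, 0 < ‖w ^ d - a i‖ := fun i =>
    lt_of_lt_of_le (by nlinarith) (hfac i).1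
  have hlogf : Real.log (‖f.eval w‖)
      = ∑ i : Fin m, Real.log (‖w ^ d - a i‖) := by
    rw [habsf]
    exact Real.log_prod (fun i _ => ne_of_gt (hfacpos i))
  have hlow : ∀ i : Fin m, Real.log t - Real.log 2 ≤ Real.log (‖w ^ d - a i‖) := by
    intro i
    calc Real.log t - Real.log 2 = Real.log (t / 2) :=
          (Real.log_div (ne_of_gt ht0) (by norm_num)).symm
      _ ≤ Real.log (‖w ^ d - a i‖) :=
          Real.log_le_log (by linarith) (hfac i).1
  have hup : ∀ i : Fin m, Real.log (‖w ^ d - a i‖)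
      ≤ Real.log t + Real.log (3 / 2) := by
    intro i
    calc Real.log (‖w ^ d - a i‖) ≤ Real.log (3 / 2 * t) :=
          Real.log_le_log (hfacpos i) (hfac i).2
      _ = Real.log t + Real.log (3 / 2) := by
          rw [Real.log_mul (by norm_num) (ne_of_gt ht0)]; ring
  have hsum_low : (m:ℝ) * (Real.log t - Real.log 2) ≤ Real.log (‖f.eval w‖) := by
    rw [hlogf]
    calc (m:ℝ) * (Real.log t - Real.log 2)
        = ∑ _i : Fin m, (Real.log t - Real.log 2) := by
          rw [Finset.sum_const, Finset.card_univ, Fintype.card_fin, nsmul_eq_mul]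
      _ ≤ _ := Finset.sum_le_sum fun i _ => hlow i
  have hsum_up : Real.log (‖f.eval w‖) ≤ (m:ℝ) * (Real.log t + Real.log (3/2)) := by
    rw [hlogf]
    calc ∑ i : Fin m, Real.log (‖w ^ d - a i‖)
        ≤ ∑ _i : Fin m, (Real.log t + Real.log (3/2)) := Finset.sum_le_sum fun i _ => hup i
      _ = (m:ℝ) * (Real.log t + Real.log (3/2)) := by
          rw [Finset.sum_const, Finset.card_univ, Fintype.card_fin, nsmul_eq_mul]
  have hexp1 : (m:ℝ) * (Real.log t - Real.log 2)
      = (d:ℝ) * m * Real.log (‖w‖) - m * Real.log 2 := by rw [hlogt]; ring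
  have hexp2 : (m:ℝ) * (Real.log t + Real.log (3/2))
      = (d:ℝ) * m * Real.log (‖w‖) + m * Real.log (3/2) := by rw [hlogt]; ring
  refine ⟨by linarith, by linarith, ?_⟩
  have hne : ((m:ℝ)-1) ≠ 0 := ne_of_gt (by linarith)
  have hqq : (m:ℝ)/((m:ℝ)-1) * ((m:ℝ)-1) = m := div_mul_cancel₀ _ hne
  have h0 : (m:ℝ)*((m:ℝ)/((m:ℝ)-1)) - m - (m:ℝ)/((m:ℝ)-1) = 0 := by linear_combination hqq
  have hq2 : (m:ℝ)*((m:ℝ)/((m:ℝ)-1))*Real.log 2 - (m:ℝ)*Real.log 2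
      = ((m:ℝ)/((m:ℝ)-1))*Real.log 2 := by linear_combination Real.log 2 * h0
  have hmul := mul_lt_mul_of_pos_left hw (show (0:ℝ) < (m:ℝ) by linarith)
  have hmA : logPlus S ≤ (m:ℝ) * logPlus S := by nlinarith
  have hlf1 : (d:ℝ)*m*Real.log (‖w‖) - m*Real.log 2
      ≤ Real.log (‖f.eval w‖) := by linarith
  have h3 : Real.log (‖f.eval w‖)
      > logPlus S + ((m:ℝ)/((m:ℝ)-1)) * Real.log 2 := by nlinarith [hmul, hlf1, hq2, hmA]
  have hfpos : 0 < Real.log (‖f.eval w‖) := lt_trans hrhs h3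
  have hmono := mul_le_mul_of_nonneg_right hdR (le_of_lt hfpos)
  rw [one_mul] at hmono
  linarith

set_option maxHeartbeats 1000000 in
/-- Archimedean escape rate: if `g(z) = (z-a_1)⋯(z-a_m)` with `m ≥ 2`,
`f(z) = g(z^d)` and `d·log|z| > log⁺ max_i |a_i| + (m/(m-1))·log 2`, then the
escape-rate function `G_f(z) = lim_k (dm)^{-k} log⁺|f^k(z)|` exists and satisfies
`log|z| - (m/(dm-1))·log 2 ≤ G_f(z) ≤ log|z| + (m/(dm-1))·log(3/2)`. -/
theorem arch_green_function_estimate (m : ℕ) (hm : 2 ≤ m) (d : ℕ) (hd : 1 ≤ d)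
    (a : Fin m → ℂ) (g : Polynomial ℂ) (hg : g = ∏ i : Fin m, (X - C (a i)))
    (f : Polynomial ℂ) (hf : f = g.comp (X ^ d))
    (z : ℂ) (hz : (d : ℝ) * Real.log (‖z‖) >
      logPlus (⨆ i, ‖a i‖) + ((m : ℝ) / (m - 1)) * Real.log 2) :
    ∃ L : ℝ,
      Tendsto (fun k : ℕ =>
          logPlus ‖(fun w => f.eval w)^[k] z‖ / ((d * m : ℝ)) ^ k)
        atTop (nhds L) ∧
      Real.log (‖z‖) - ((m : ℝ) / (d * m - 1)) * Real.log 2 ≤ L ∧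
      L ≤ Real.log (‖z‖) + ((m : ℝ) / (d * m - 1)) * Real.log (3 / 2) := by
  have hfK : f = (∏ i : Fin m, (X - C (a i))).comp (X ^ d) := by rw [hf, hg]
  have hmR : (2:ℝ) ≤ (m:ℝ) := by exact_mod_cast hm
  have hdR : (1:ℝ) ≤ (d:ℝ) := by exact_mod_cast hd
  have hlog2 : 0 < Real.log 2 := Real.log_pos (by norm_num)
  have hlog32 : 0 < Real.log (3/2) := Real.log_pos (by norm_num)
  have hlog32le : Real.log (3/2) ≤ Real.log 2 := Real.log_le_log (by norm_num) (by norm_num)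
  have hm1 : (1:ℝ) ≤ (m:ℝ)/((m:ℝ)-1) := by
    rw [le_div_iff₀ (by linarith)]; linarith
  have hrhs : 0 < logPlus (⨆ i, ‖a i‖) + ((m:ℝ)/((m:ℝ)-1)) * Real.log 2 := by
    have : 0 ≤ logPlus (⨆ i, ‖a i‖) := le_max_right _ _
    nlinarith
  set u : ℕ → ℝ := fun k => Real.log (‖f.eval^[k] z‖) with hu
  have inv : ∀ k, (d:ℝ) * u k >
      logPlus (⨆ i, ‖a i‖) + ((m:ℝ)/((m:ℝ)-1)) * Real.log 2 := by
    intro k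
    induction k with
    | zero => simpa [hu] using hz
    | succ k ih =>
      have h := (arch_key m hm d hd a f hfK _ ih).2.2
      simpa [hu, Function.iterate_succ_apply'] using h
  have upos : ∀ k, 0 < u k := by
    intro k
    nlinarith [inv k, hrhs, hdR]
  have b1 : ∀ k, (d:ℝ)*m*u k - m*Real.log 2 ≤ u (k+1) := by
    intro k
    have h := (arch_key m hm d hd a f hfK _ (inv k)).1
    simpa [hu, Function.iterate_succ_apply'] using h
  have b2 : ∀ k, u (k+1) ≤ (d:ℝ)*m*u k + m*Real.log (3/2) := by
    intro k
    have h := (arch_key m hm d hd a f hfK _ (inv k)).2.1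
    simpa [hu, Function.iterate_succ_apply'] using h
  set D : ℝ := (d:ℝ) * (m:ℝ) with hD
  have hD2 : 2 ≤ D := by nlinarith
  have hD0 : 0 < D := by linarith
  have hD1 : 1 < D := by linarith
  have hDm1 : 0 < D - 1 := by linarith
  set r : ℝ := D⁻¹ with hr
  have hr0 : 0 ≤ r := inv_nonneg.mpr (le_of_lt hD0)
  have hr1 : r < 1 := inv_lt_one_of_one_lt₀ hD1
  set wseq : ℕ → ℝ := fun k => u (k+1)/D^(k+1) - u k / D^k with hwseq
  have hpow : ∀ k : ℕ, (0:ℝ) < D ^ k := fun k => pow_pos hD0 k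
  have hrpow : ∀ k : ℕ, r ^ (k+1) = (D^(k+1))⁻¹ := by
    intro k; rw [hr, inv_pow]
  have hform : ∀ k, wseq k = (u (k+1) - D * u k)/D^(k+1) := by
    intro k
    rw [hwseq]
    field_simp
    rw [pow_succ]
    ring
  have hw1 : ∀ k, wseq k ≤ ((m:ℝ)*Real.log (3/2)) * r^(k+1) := by
    intro k
    rw [hform k, hrpow, ← div_eq_mul_inv]
    exact (div_le_div_iff_of_pos_right (hpow (k+1))).mpr (by nlinarith [b2 k])
  have hw2 : ∀ k, (-((m:ℝ)*Real.log 2)) * r^(k+1) ≤ wseq k := by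
    intro k
    rw [hform k, hrpow, ← div_eq_mul_inv]
    exact (div_le_div_iff_of_pos_right (hpow (k+1))).mpr (by nlinarith [b1 k])
  have hgeom : Summable (fun k : ℕ => r^k) := summable_geometric_of_lt_one hr0 hr1
  have hsum_aux : ∀ c : ℝ, Summable (fun k : ℕ => c * r^(k+1)) := by
    intro c
    exact (hgeom.mul_left (c*r)).congr (fun k => by rw [pow_succ]; ring)
  have htsum_aux : ∀ c : ℝ, ∑' k : ℕ, c * r^(k+1) = c/(D-1) := by
    intro c
    have h1 : ∑' k : ℕ, c * r^(k+1) = (c*r) * ∑' k : ℕ, r^k := by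
      rw [← tsum_mul_left]
      congr 1
      funext k
      rw [pow_succ]; ring
    rw [h1, tsum_geometric_of_lt_one hr0 hr1, hr]
    have h2 : (1 - D⁻¹) = (D-1)/D := by field_simp
    rw [h2]
    field_simp
  have habsb : ∀ k, |wseq k| ≤ ((m:ℝ)*Real.log 2) * r^(k+1) := by
    intro k
    rw [abs_le]
    refine ⟨by linarith [hw2 k], ?_⟩
    have h := hw1 k
    have h2 : ((m:ℝ)*Real.log (3/2)) * r^(k+1) ≤ ((m:ℝ)*Real.log 2) * r^(k+1) := by
      apply mul_le_mul_of_nonneg_right _ (pow_nonneg hr0 _)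
      nlinarith
    exact h.trans h2
  have hsw : Summable wseq :=
    Summable.of_abs (Summable.of_nonneg_of_le (fun k => abs_nonneg _) habsb (hsum_aux _))
  refine ⟨u 0 + ∑' k, wseq k, ?_, ?_, ?_⟩
  · have heq : (fun k : ℕ => logPlus (‖(fun w => f.eval w)^[k] z‖) / D ^ k)
        = fun n : ℕ => u 0 + ∑ j ∈ Finset.range n, wseq j := by
      funext n
      have h1 : logPlus (‖(fun w => f.eval w)^[n] z‖) = u n :=
        max_eq_left (upos n).le
      rw [h1]
      have h2 : ∑ j ∈ Finset.range n, wseq j = u n / D^n - u 0 / D^0 :=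
        Finset.sum_range_sub (fun j => u j / D^j) n
      rw [h2]
      ring
    rw [heq]
    exact (hsw.hasSum.tendsto_sum_nat).const_add (u 0)
  · have hts : (-((m:ℝ)*Real.log 2))/(D-1) ≤ ∑' k, wseq k := by
      calc (-((m:ℝ)*Real.log 2))/(D-1) = ∑' k : ℕ, (-((m:ℝ)*Real.log 2)) * r^(k+1) :=
            (htsum_aux _).symm
        _ ≤ ∑' k, wseq k := Summable.tsum_le_tsum (fun k => hw2 k) (hsum_aux _) hsw
    have hu0 : u 0 = Real.log (‖z‖) := by simp [hu]
    have e1 : (-((m:ℝ)*Real.log 2))/(D-1) = -((m:ℝ)/(D-1) * Real.log 2) := by ring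
    linarith [hts]
  · have hts : ∑' k, wseq k ≤ ((m:ℝ)*Real.log (3/2))/(D-1) := by
      calc ∑' k, wseq k ≤ ∑' k : ℕ, ((m:ℝ)*Real.log (3/2)) * r^(k+1) :=
            Summable.tsum_le_tsum (fun k => hw1 k) hsw (hsum_aux _)
        _ = ((m:ℝ)*Real.log (3/2))/(D-1) := htsum_aux _
    have hu0 : u 0 = Real.log (‖z‖) := by simp [hu]
    have e1 : ((m:ℝ)*Real.log (3/2))/(D-1) = (m:ℝ)/(D-1) * Real.log (3/2) := by ring
    linarith [hts]
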